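/- arXiv:1211.1999 — 3 statements merged into one kernel-verified Lean document; each statement's English description precedes it below -/
import Mathlib

section
/- Let G be a minimal counterexample to Ohba's Conjecture (a complete k-partite graph on at most 2k+1 vertices with χ_ℓ(G) > k such that all graphs on fewer vertices satisfy Ohba's Conjecture) and L a list assignment with |L(v)| ≥ k for all v for which G is not L-colourable. Then for every part P of G with |P| ≥ 2, the intersection ⋂_{v∈P} L(v) is empty. -/
/-- `f` is an acceptable colouring for the list assignment `L` on `G`:
it is proper and each vertex gets a colour from its list. -/
def IsListColoring {V : Type} (G : SimpleGraph V) (L : V → Finset ℕ) (f : V → ℕ) : Prop :=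
  (∀ v, f v ∈ L v) ∧ ∀ ⦃u w : V⦄, G.Adj u w → f u ≠ f w

/-- `G` is `L`-colourable. -/
def ListColorable {V : Type} (G : SimpleGraph V) (L : V → Finset ℕ) : Prop :=
  ∃ f, IsListColoring G L f

/-- `G` is `k`-choosable: `L`-colourable whenever every list has size at least `k`. -/
def Choosable {V : Type} (G : SimpleGraph V) (k : ℕ) : Prop :=
  ∀ L : V → Finset ℕ, (∀ v, k ≤ (L v).card) → ListColorable G L

/-- The list chromatic number of `G`. -/
noncomputable def listChromaticNumber {V : Type} (G : SimpleGraph V) : ℕ :=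
  sInf {k | Choosable G k}

open Finset
open scoped Classical

/-- The set `C` of all colours appearing in some list. -/
noncomputable def colorSet {V : Type} [Fintype V] (L : V → Finset ℕ) : Finset ℕ :=
  Finset.univ.biUnion L

/-- `N_B(c)`: the set of vertices whose list contains the colour `c`. -/
noncomputable def NB {V : Type} [Fintype V] (L : V → Finset ℕ) (c : ℕ) : Finset V :=
  Finset.univ.filter (fun v => c ∈ L v)

/-- `γ = |V(G)| - |C|`. -/
noncomputable def gam (V : Type) [Fintype V] (L : V → Finset ℕ) : ℕ :=
  Fintype.card V - (colorSet L).card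

/-- The part (maximal stable set) of the complete multipartite graph with index `i`. -/
noncomputable def part {V : Type} [Fintype V] {k : ℕ} (p : V → Fin k) (i : Fin k) : Finset V :=
  Finset.univ.filter (fun v => p v = i)

/-- `v` is a singleton: the part containing `v` has exactly one element. -/
def IsSingleton {V : Type} [Fintype V] {k : ℕ} (p : V → Fin k) (v : V) : Prop :=
  (part p (p v)).card = 1

/-- `b`: the number of non-singleton parts. -/
noncomputable def numBigParts {V : Type} [Fintype V] {k : ℕ} (p : V → Fin k) : ℕ :=
  (Finset.univ.filter (fun i : Fin k => 2 ≤ (part p i).card)).card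

/-- A colour is globally frequent if it appears in the lists of at least `k+1` vertices. -/
def GloballyFrequent {V : Type} [Fintype V] (L : V → Finset ℕ) (k : ℕ) (c : ℕ) : Prop :=
  k + 1 ≤ (NB L c).card

/-- A colour is frequent among singletons if it appears in the lists of at least `γ`
singletons. -/
def FrequentAmongSingletons {V : Type} [Fintype V] {k : ℕ} (p : V → Fin k)
    (L : V → Finset ℕ) (c : ℕ) : Prop :=
  gam V L ≤ (Finset.univ.filter (fun v => IsSingleton p v ∧ c ∈ L v)).card

/-- A colour is frequent if it is globally frequent or frequent among singletons. -/
def Frequent {V : Type} [Fintype V] {k : ℕ} (p : V → Fin k) (L : V → Finset ℕ) (c : ℕ) : Prop :=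
  GloballyFrequent L k c ∨ FrequentAmongSingletons p L c

/-- A proper colouring `f : V → C` is near-acceptable for `L` if every vertex `v` satisfies
`f v ∈ L v`, or `f v` is frequent and `v` is the unique vertex coloured `f v`. -/
def NearAcceptable {V : Type} [Fintype V] {k : ℕ} (G : SimpleGraph V) (p : V → Fin k)
    (L : V → Finset ℕ) (f : V → ℕ) : Prop :=
  (∀ v, f v ∈ colorSet L) ∧ (∀ ⦃u w : V⦄, G.Adj u w → f u ≠ f w) ∧
    ∀ v, f v ∈ L v ∨ (Frequent p L (f v) ∧ ∀ u, f u = f v → u = v)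

/-- `L` is a maximal bad list assignment: adding any colour of `C` to any list makes `G`
colourable. -/
def MaximalBad {V : Type} [Fintype V] (G : SimpleGraph V) (L : V → Finset ℕ) : Prop :=
  ∀ v c, c ∈ colorSet L → c ∉ L v →
    ListColorable G (Function.update L v (insert c (L v)))

/-- A minimal counterexample to Ohba's conjecture: `G` is a complete `k`-partite graph
(with part-indexing map `p`) on at most `2k+1` vertices, `L` is a list assignment with all
lists of size at least `k` for which `G` is not `L`-colourable (so `χ_ℓ(G) > k = χ(G)`),
and every graph on fewer vertices satisfies Ohba's conjecture. -/
structure MinCex (V : Type) [Fintype V] (G : SimpleGraph V) (k : ℕ)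
    (p : V → Fin k) (L : V → Finset ℕ) : Prop where
  adj_iff : ∀ u v, G.Adj u v ↔ p u ≠ p v
  surj : Function.Surjective p
  card_le : Fintype.card V ≤ 2 * k + 1
  lists : ∀ v, k ≤ (L v).card
  bad : ¬ ListColorable G L
  minimal : ∀ (W : Type) [Fintype W] (H : SimpleGraph W) (j : ℕ),
    Fintype.card W < Fintype.card V → H.chromaticNumber = (j : ℕ∞) →
    Fintype.card W ≤ 2 * j + 1 → listChromaticNumber H = j

open SimpleGraph in
lemma aux_choosable_card {W : Type} [Fintype W] (H : SimpleGraph W) :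
    Choosable H (Fintype.card W) := by
  intro L hL
  have : ∀ s : Finset W, s.card ≤ (s.biUnion L).card := by
    intro s
    rcases s.eq_empty_or_nonempty with rfl | ⟨v, hv⟩
    · simp
    · calc s.card ≤ Fintype.card W := Finset.card_le_univ s
        _ ≤ (L v).card := hL v
        _ ≤ (s.biUnion L).card :=
          Finset.card_le_card (Finset.subset_biUnion_of_mem L hv)
  obtain ⟨f, hfinj, hf⟩ := (Finset.all_card_le_biUnion_card_iff_exists_injective L).mp this
  exact ⟨f, hf, fun u w hadj => fun hfe => hadj.ne (hfinj hfe)⟩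

lemma aux_choosable_of_lcn {W : Type} [Fintype W] (H : SimpleGraph W) (j : ℕ)
    (hj : listChromaticNumber H = j) : Choosable H j := by
  have hne : {n | Choosable H n}.Nonempty := ⟨Fintype.card W, aux_choosable_card H⟩
  have := Nat.sInf_mem hne
  rwa [show sInf {n | Choosable H n} = j from hj] at this

/-- In a minimal counterexample, every part with at least two vertices has empty
intersection of its lists. -/
theorem stmt_3 (V : Type) [Fintype V] (G : SimpleGraph V) (k : ℕ) (p : V → Fin k)
    (L : V → Finset ℕ) (h : MinCex V G k p L) (i : Fin k) (hi : 2 ≤ (part p i).card) :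
    ¬ ∃ c : ℕ, ∀ v, p v = i → c ∈ L v := by
  rintro ⟨c, hc⟩
  have hk : 0 < k := i.pos
  -- the graph with part `i` removed
  let W := {v : V // p v ≠ i}
  let H : SimpleGraph W := G.comap Subtype.val
  -- cardinality of `W`
  have hcardW : Fintype.card W = Fintype.card V - (part p i).card := by
    rw [Fintype.card_subtype]
    have := Finset.card_filter_add_card_filter_not
      (s := (Finset.univ : Finset V)) (p := fun v => p v = i)
    simp only [Finset.card_univ] at this
    have h2 : (part p i).card = (Finset.univ.filter (fun v => p v = i)).card := rfl
    have h3 : (Finset.univ.filter (fun v => ¬ p v = i)).card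
        = (Finset.univ.filter (fun v => p v ≠ i)).card := rfl
    omega
  have hpartle : (part p i).card ≤ Fintype.card V := Finset.card_le_univ _
  have hWlt : Fintype.card W < Fintype.card V := by omega
  have hWle : Fintype.card W ≤ 2 * (k - 1) + 1 := by
    have := h.card_le
    omega
  -- the index type for the remaining parts
  have hcardI : Fintype.card {j : Fin k // j ≠ i} = k - 1 := by
    rw [Fintype.card_subtype_compl, Fintype.card_subtype_eq, Fintype.card_fin]
  let e : {j : Fin k // j ≠ i} ≃ Fin (k - 1) := Fintype.equivFinOfCardEq hcardI
  -- upper bound on the chromatic number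
  have hcol : H.Colorable (k - 1) := by
    refine ⟨SimpleGraph.Coloring.mk (fun v => e ⟨p v.1, v.2⟩) ?_⟩
    intro u w hadj
    have hne : p u.1 ≠ p w.1 := (h.adj_iff u.1 w.1).mp hadj
    intro he
    exact hne (congrArg Subtype.val (e.injective he))
  -- a clique of size `k - 1`
  choose w hw using h.surj
  have hchrom : H.chromaticNumber = ((k - 1 : ℕ) : ℕ∞) := by
    refine le_antisymm hcol.chromaticNumber_le ?_
    set s : Finset W := Finset.univ.image
      (fun j : {j : Fin k // j ≠ i} => (⟨w j.1, by rw [hw]; exact j.2⟩ : W)) with hs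
    have hclique : H.IsClique (s : Set W) := by
      intro u hu v hv huv
      simp only [hs, Finset.coe_image, Set.mem_image] at hu hv
      obtain ⟨ju, -, rfl⟩ := hu
      obtain ⟨jv, -, rfl⟩ := hv
      have : p (w ju.1) ≠ p (w jv.1) := by
        rw [hw, hw]
        intro hj
        exact huv (Subtype.ext (congrArg w hj))
      exact (h.adj_iff _ _).mpr this
    have hscard : s.card = k - 1 := by
      rw [hs, Finset.card_image_of_injective _ ?_, Finset.card_univ, hcardI]
      intro a b hab
      have : p (w a.1) = p (w b.1) := congrArg p (congrArg Subtype.val hab)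
      rw [hw, hw] at this
      exact Subtype.ext this
    have := hclique.card_le_chromaticNumber
    rwa [hscard] at this
  -- apply minimality
  have hlcn : listChromaticNumber H = k - 1 := h.minimal W H (k - 1) hWlt hchrom hWle
  have hchoos : Choosable H (k - 1) := aux_choosable_of_lcn H (k - 1) hlcn
  -- the reduced list assignment
  obtain ⟨f', hf'mem, hf'prop⟩ := hchoos (fun v => (L v.1).erase c) (by
    intro v
    show k - 1 ≤ ((L v.1).erase c).card
    have h1 : (L v.1).card - 1 ≤ ((L v.1).erase c).card := Finset.pred_card_le_card_erase
    have h2 := h.lists v.1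
    omega)
  -- extend to a colouring of `G`
  refine h.bad ⟨fun v => if hv : p v = i then c else f' ⟨v, hv⟩, ?_, ?_⟩
  · intro v
    by_cases hv : p v = i
    · simp only [hv, dif_pos]
      exact hc v hv
    · simp only [hv, dif_neg, not_false_iff]
      exact Finset.mem_of_mem_erase (hf'mem ⟨v, hv⟩)
  · intro u v hadj
    have hne : p u ≠ p v := (h.adj_iff u v).mp hadj
    by_cases hu : p u = i <;> by_cases hv : p v = i
    · exact absurd (hu.trans hv.symm) hne
    · simp only [hu, dif_pos, hv, dif_neg, not_false_iff]
      exact fun he => Finset.ne_of_mem_erase (hf'mem ⟨v, hv⟩) he.symm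
    · simp only [hu, dif_neg, not_false_iff, hv, dif_pos]
      exact Finset.ne_of_mem_erase (hf'mem ⟨u, hu⟩)
    · simp only [hu, hv, dif_neg, not_false_iff]
      exact hf'prop (by exact hadj : H.Adj ⟨u, hu⟩ ⟨v, hv⟩)
end

section
/- Let G be a minimal counterexample to Ohba's Conjecture with bad list assignment L and C = ⋃_v L(v). Then |C| < |V(G)| ≤ 2k+1. -/
open Finset
open scoped Classical

/-- SDR over a subtype of a finset. -/
lemma exists_sdr_subtype {γ δ : Type} [DecidableEq δ] (B : Finset γ) (t : γ → Finset δ)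
    (hall : ∀ A ⊆ B, A.card ≤ (A.biUnion t).card) :
    ∃ f : ↥B → δ, Function.Injective f ∧ ∀ b : ↥B, f b ∈ t b.1 := by
  have key := (Finset.all_card_le_biUnion_card_iff_exists_injective
      (fun b : ↥B => t b.1)).1 ?_
  · obtain ⟨f, hf1, hf2⟩ := key; exact ⟨f, hf1, hf2⟩
  · intro s
    have h1 : (s.image Subtype.val).card = s.card :=
      Finset.card_image_of_injective _ Subtype.val_injective
    have h2 : (s.image Subtype.val).biUnion t = s.biUnion (fun b => t b.1) := by
      ext x; simp [Finset.mem_biUnion]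
    have h3 : s.image Subtype.val ⊆ B := by
      intro x hx
      obtain ⟨b, _, rfl⟩ := Finset.mem_image.1 hx
      exact b.2
    have := hall _ h3
    rw [h1, h2] at this
    exact this

lemma choosable_card (W : Type) [Fintype W] (H : SimpleGraph W) :
    Choosable H (Fintype.card W) := by
  intro L hL
  have hall : ∀ s : Finset W, s.card ≤ (s.biUnion L).card := by
    intro s
    rcases s.eq_empty_or_nonempty with rfl | ⟨w, hw⟩
    · simp
    · calc s.card ≤ Fintype.card W := Finset.card_le_univ s
        _ ≤ (L w).card := hL w
        _ ≤ (s.biUnion L).card :=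
            Finset.card_le_card (fun c hc => Finset.mem_biUnion.2 ⟨w, hw, hc⟩)
  obtain ⟨f, hinj, hf⟩ := (Finset.all_card_le_biUnion_card_iff_exists_injective L).1 hall
  exact ⟨f, hf, fun u w hadj he => hadj.ne (hinj he)⟩

lemma choosable_of_listChromaticNumber {W : Type} [Fintype W] (H : SimpleGraph W) {j : ℕ}
    (hj : listChromaticNumber H = j) : Choosable H j := by
  have hne : {m | Choosable H m}.Nonempty := ⟨Fintype.card W, choosable_card _ H⟩
  have hmem := Nat.sInf_mem hne
  have he : sInf {m | Choosable H m} = j := hj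
  rw [he] at hmem
  exact hmem

lemma chromaticNumber_multipartite {W : Type} [Fintype W] {I : Type} [DecidableEq I]
    (H : SimpleGraph W) (q : W → I) (hadj : ∀ u v, H.Adj u v ↔ q u ≠ q v) :
    H.chromaticNumber = ((Finset.univ.image q).card : ℕ∞) := by
  classical
  have hcol : H.Colorable ((Finset.univ.image q).card) := by
    have C : H.Coloring ↥(Finset.univ.image q) :=
      SimpleGraph.Coloring.mk
        (fun w => ⟨q w, Finset.mem_image_of_mem q (Finset.mem_univ w)⟩)
        (by intro u v huv h
            exact (hadj u v).1 huv (congrArg Subtype.val h))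
    simpa [Fintype.card_coe] using C.colorable
  refine le_antisymm hcol.chromaticNumber_le ?_
  have hsec : ∀ i ∈ Finset.univ.image q, ∃ w : W, q w = i := by
    intro i hi
    obtain ⟨w, _, rfl⟩ := Finset.mem_image.1 hi
    exact ⟨w, rfl⟩
  choose sec hsecq using hsec
  set s : Finset W := (Finset.univ.image q).attach.image (fun i => sec i.1 i.2) with hs
  have hclique : H.IsClique (s : Set W) := by
    intro u hu v hv huv
    simp only [hs, Finset.coe_image, Set.mem_image] at hu hv
    obtain ⟨⟨i, hi⟩, _, rfl⟩ := hu
    obtain ⟨⟨i', hi'⟩, _, rfl⟩ := hv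
    rw [hadj]
    rw [hsecq i hi, hsecq i' hi']
    intro hii'
    exact huv (by subst hii'; rfl)
  have hinj : Function.Injective
      (fun i : {x // x ∈ Finset.univ.image q} => sec i.1 i.2) := by
    intro a b hab
    have h2 := congrArg q hab
    simp only [hsecq] at h2
    exact Subtype.ext h2
  have hcard : s.card = (Finset.univ.image q).card := by
    rw [hs, Finset.card_image_of_injective _ hinj, Finset.card_attach]
  have := hclique.card_le_chromaticNumber
  rw [hcard] at this
  exact this

lemma univ_image_subtype {γ δ : Type} [DecidableEq δ] (S : Finset γ) (f : γ → δ) :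
    Finset.univ.image (fun v : ↥S => f v.1) = S.image f := by
  ext x
  simp only [Finset.mem_image, Finset.mem_univ, true_and, Subtype.exists, exists_prop]

/-- In a minimal counterexample, `|C| < |V(G)| ≤ 2k+1`. -/
theorem stmt_5 (V : Type) [Fintype V] (G : SimpleGraph V) (k : ℕ) (p : V → Fin k)
    (L : V → Finset ℕ) (h : MinCex V G k p L) :
    (colorSet L).card < Fintype.card V ∧ Fintype.card V ≤ 2 * k + 1 := by
  refine ⟨?_, h.card_le⟩
  by_contra hCn
  push_neg at hCn
  apply h.bad
  by_cases hV : Nonempty V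
  swap
  · exact ⟨fun _ => 0, fun v => ((hV ⟨v⟩).elim), fun u w ha => ((hV ⟨u⟩).elim)⟩
  by_cases hHall : ∀ D ⊆ colorSet L, D.card ≤ (D.biUnion (NB L)).card
  · -- colour-side Hall holds : |C| = n and we obtain an injective colouring
    obtain ⟨f, hfinj, hf⟩ := exists_sdr_subtype (colorSet L) (NB L) hHall
    have hbij : Function.Bijective f := by
      refine (Fintype.bijective_iff_injective_and_card f).2 ⟨hfinj, ?_⟩
      have h1 : Fintype.card ↥(colorSet L) ≤ Fintype.card V :=
        Fintype.card_le_of_injective f hfinj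
      have h2 : Fintype.card ↥(colorSet L) = (colorSet L).card := Fintype.card_coe _
      omega
    set e := Equiv.ofBijective f hbij with he
    refine ⟨fun v => (e.symm v).1, fun v => ?_, fun u w ha heq => ?_⟩
    · have h1 := hf (e.symm v)
      rw [NB, Finset.mem_filter] at h1
      have h2 : f (e.symm v) = v := e.apply_symm_apply v
      rw [h2] at h1
      exact h1.2
    · exact ha.ne (e.symm.injective (Subtype.coe_injective heq))
  · push_neg at hHall
    obtain ⟨D0, hD0sub, hD0⟩ := hHall
    obtain ⟨D, hDmem, hDmin⟩ := Finset.exists_min_image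
      (((colorSet L).powerset).filter (fun D => (D.biUnion (NB L)).card < D.card))
      Finset.card ⟨D0, by rw [Finset.mem_filter, Finset.mem_powerset]; exact ⟨hD0sub, hD0⟩⟩
    rw [Finset.mem_filter, Finset.mem_powerset] at hDmem
    obtain ⟨hDC, hDU⟩ := hDmem
    set U := D.biUnion (NB L) with hUdef
    have subHall : ∀ A ⊆ D, A.card < D.card → A.card ≤ (A.biUnion (NB L)).card := by
      intro A hAD hAcard
      by_contra hA
      push_neg at hA
      have := hDmin A (by
        rw [Finset.mem_filter, Finset.mem_powerset]
        exact ⟨hAD.trans hDC, hA⟩)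
      omega
    have hDpos : 0 < D.card := lt_of_le_of_lt (Nat.zero_le _) hDU
    obtain ⟨c₀, hc₀⟩ := Finset.card_pos.1 hDpos
    have hU1 : U.card = D.card - 1 := by
      have h1 : (D.erase c₀).card ≤ ((D.erase c₀).biUnion (NB L)).card :=
        subHall _ (Finset.erase_subset _ _)
          (by rw [Finset.card_erase_of_mem hc₀]; omega)
      have h2 : (D.erase c₀).biUnion (NB L) ⊆ U :=
        Finset.biUnion_subset_biUnion_of_subset_left _ (Finset.erase_subset _ _)
      have h3 := Finset.card_le_card h2
      rw [Finset.card_erase_of_mem hc₀] at h1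
      omega
    have hUpos : 0 < U.card := by
      have hmem : c₀ ∈ colorSet L := hDC hc₀
      rw [colorSet, Finset.mem_biUnion] at hmem
      obtain ⟨v, _, hv⟩ := hmem
      have : v ∈ U := Finset.mem_biUnion.2
        ⟨c₀, hc₀, by rw [NB, Finset.mem_filter]; exact ⟨Finset.mem_univ _, hv⟩⟩
      exact Finset.card_pos.2 ⟨v, this⟩
    have hallψ : ∀ A ⊆ D.erase c₀, A.card ≤ (A.biUnion (NB L)).card := by
      intro A hA
      refine subHall A (hA.trans (Finset.erase_subset _ _)) ?_
      calc A.card ≤ (D.erase c₀).card := Finset.card_le_card hA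
        _ < D.card := by rw [Finset.card_erase_of_mem hc₀]; omega
    obtain ⟨ψ, hψinj, hψ⟩ := exists_sdr_subtype (D.erase c₀) (NB L) hallψ
    have hψU : ∀ c : ↥(D.erase c₀), ψ c ∈ U := fun c =>
      Finset.mem_biUnion.2 ⟨c.1, Finset.erase_subset _ _ c.2, hψ c⟩
    have himg : Finset.univ.image ψ = U := by
      apply Finset.eq_of_subset_of_card_le
      · intro v hv
        obtain ⟨c, _, rfl⟩ := Finset.mem_image.1 hv
        exact hψU c
      · rw [Finset.card_image_of_injective _ hψinj, Finset.card_univ, Fintype.card_coe,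
          Finset.card_erase_of_mem hc₀, hU1]
    have hUexists : ∀ v ∈ U, ∃ c : ↥(D.erase c₀), ψ c = v := by
      intro v hv
      rw [← himg] at hv
      obtain ⟨c, _, hc⟩ := Finset.mem_image.1 hv
      exact ⟨c, hc⟩
    set σ : V → ℕ :=
      fun v => if hv : ∃ c : ↥(D.erase c₀), ψ c = v then hv.choose.1 else 0 with hσdef
    have hσall : ∀ v ∈ U, σ v ∈ L v ∧ σ v ∈ D ∧
        ∃ c : ↥(D.erase c₀), ψ c = v ∧ c.1 = σ v := by
      intro v hv
      have hex := hUexists v hv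
      have hσv : σ v = hex.choose.1 := by rw [hσdef]; exact dif_pos hex
      have hspec : ψ hex.choose = v := hex.choose_spec
      have hL : σ v ∈ L v := by
        have := hψ hex.choose
        rw [NB, Finset.mem_filter, hspec] at this
        rw [hσv]
        exact this.2
      have hD : σ v ∈ D := by
        rw [hσv]
        exact Finset.mem_of_mem_erase hex.choose.2
      exact ⟨hL, hD, hex.choose, hspec, hσv.symm⟩
    have hσinj : ∀ v ∈ U, ∀ w ∈ U, σ v = σ w → v = w := by
      intro v hv w hw hvw
      obtain ⟨_, _, cv, hcv1, hcv2⟩ := hσall v hv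
      obtain ⟨_, _, cw, hcw1, hcw2⟩ := hσall w hw
      have : cv = cw := Subtype.ext (by rw [hcv2, hcw2, hvw])
      rw [← hcv1, ← hcw1, this]
    have hDS : ∀ v, v ∉ U → ∀ c ∈ D, c ∉ L v := by
      intro v hv c hc hcL
      exact hv (Finset.mem_biUnion.2
        ⟨c, hc, Finset.mem_filter.2 ⟨Finset.mem_univ _, hcL⟩⟩)
    set S : Finset V := Finset.univ \ U with hSdef
    have hSmem : ∀ v, v ∈ S ↔ v ∉ U := by
      intro v; rw [hSdef, Finset.mem_sdiff]; simp
    have hScard : S.card + U.card = Fintype.card V := by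
      rw [hSdef, Finset.card_sdiff_of_subset (Finset.subset_univ _), Finset.card_univ]
      have : U.card ≤ Fintype.card V := by
        rw [← Finset.card_univ]; exact Finset.card_le_card (Finset.subset_univ _)
      omega
    have hpartmem : ∀ (i : Fin k) (v : V), v ∈ part p i ↔ p v = i := by
      intro i v; rw [part, Finset.mem_filter]; simp
    set m := (Finset.univ.filter (fun i : Fin k => part p i ⊆ U)).card with hmdef
    have hjSm : (S.image p).card + m = k := by
      have himgfilter : S.image p = Finset.univ.filter (fun i => ¬ part p i ⊆ U) := by
        ext i
        simp only [Finset.mem_image, Finset.mem_filter, Finset.mem_univ, true_and]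
        constructor
        · rintro ⟨v, hvS, rfl⟩
          intro hsub
          exact (hSmem v).1 hvS (hsub ((hpartmem _ v).2 rfl))
        · intro hsub
          rw [Finset.not_subset] at hsub
          obtain ⟨v, hv1, hv2⟩ := hsub
          exact ⟨v, (hSmem v).2 hv2, (hpartmem _ v).1 hv1⟩
      have hsplit := Finset.card_filter_add_card_filter_not
        (s := (Finset.univ : Finset (Fin k))) (p := fun i => part p i ⊆ U)
      have hk : (Finset.univ : Finset (Fin k)).card = k := by simp
      rw [himgfilter, hmdef]
      omega
    have hmU : m ≤ U.card := by
      rw [hmdef]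
      apply Finset.card_le_card_of_injOn (fun i => (h.surj i).choose)
      · intro i hi
        rw [Finset.mem_coe, Finset.mem_filter] at hi
        exact hi.2 ((hpartmem i _).2 (h.surj i).choose_spec)
      · intro i _ i' _ hii'
        rw [← (h.surj i).choose_spec, ← (h.surj i').choose_spec]
        simp only [hii']
    by_cases hm : m = 0
    · -- every part meets S : colour S by minimality, U by σ
      have hSimg : (S.image p).card = k := by omega
      set G₁ : SimpleGraph ↥S := SimpleGraph.comap Subtype.val G with hG₁
      have hG₁adj : ∀ u v : ↥S, G₁.Adj u v ↔ p u.1 ≠ p v.1 := by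
        intro u v; exact h.adj_iff u.1 v.1
      have hχ : G₁.chromaticNumber = (k : ℕ∞) := by
        rw [chromaticNumber_multipartite G₁ (fun v => p v.1) hG₁adj]
        rw [univ_image_subtype S p, hSimg]
      have hcard₁ : Fintype.card ↥S = S.card := Fintype.card_coe _
      have hlt₁ : Fintype.card ↥S < Fintype.card V := by omega
      have hle₁ : Fintype.card ↥S ≤ 2 * k + 1 := by
        have := h.card_le; omega
      obtain ⟨f₁, hf₁mem, hf₁prop⟩ := choosable_of_listChromaticNumber G₁
        (h.minimal ↥S G₁ k hlt₁ hχ hle₁) (fun v => L v.1) (fun v => h.lists v.1)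
      refine ⟨fun v => if hv : v ∈ U then σ v else f₁ ⟨v, (hSmem v).2 hv⟩,
        fun v => ?_, fun x y hxy heq => ?_⟩
      · by_cases hv : v ∈ U
        · simp only [dif_pos hv]; exact (hσall v hv).1
        · simp only [dif_neg hv]; exact hf₁mem _
      · by_cases hx : x ∈ U <;> by_cases hy : y ∈ U
        · simp only [dif_pos hx, dif_pos hy] at heq
          exact hxy.ne (hσinj x hx y hy heq)
        · simp only [dif_pos hx, dif_neg hy] at heq
          exact hDS y hy (σ x) (hσall x hx).2.1 (heq ▸ hf₁mem ⟨y, (hSmem y).2 hy⟩)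
        · simp only [dif_neg hx, dif_pos hy] at heq
          exact hDS x hx (σ y) (hσall y hy).2.1 (heq ▸ hf₁mem ⟨x, (hSmem x).2 hx⟩)
        · simp only [dif_neg hx, dif_neg hy] at heq
          exact hf₁prop (show G₁.Adj ⟨x, (hSmem x).2 hx⟩ ⟨y, (hSmem y).2 hy⟩ from hxy) heq
    · have hm1 : 1 ≤ m := Nat.one_le_iff_ne_zero.2 hm
      by_cases hHallS : ∀ A ⊆ S, A.card ≤ (A.biUnion L).card
      · -- SDR on S
        obtain ⟨g, hginj, hg⟩ := exists_sdr_subtype S L hHallS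
        refine ⟨fun v => if hv : v ∈ U then σ v else g ⟨v, (hSmem v).2 hv⟩,
          fun v => ?_, fun x y hxy heq => ?_⟩
        · by_cases hv : v ∈ U
          · simp only [dif_pos hv]; exact (hσall v hv).1
          · simp only [dif_neg hv]; exact hg _
        · by_cases hx : x ∈ U <;> by_cases hy : y ∈ U
          · simp only [dif_pos hx, dif_pos hy] at heq
            exact hxy.ne (hσinj x hx y hy heq)
          · simp only [dif_pos hx, dif_neg hy] at heq
            exact hDS y hy (σ x) (hσall x hx).2.1 (heq ▸ hg ⟨y, (hSmem y).2 hy⟩)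
          · simp only [dif_neg hx, dif_pos hy] at heq
            exact hDS x hx (σ y) (hσall y hy).2.1 (heq ▸ hg ⟨x, (hSmem x).2 hx⟩)
          · simp only [dif_neg hx, dif_neg hy] at heq
            exact hxy.ne (congrArg Subtype.val (hginj heq))
      · push_neg at hHallS
        obtain ⟨A, hAS, hAviol⟩ := hHallS
        have hAk : k + 1 ≤ A.card := by
          obtain ⟨v₀, hv₀⟩ := Finset.card_pos.1 (lt_of_le_of_lt (Nat.zero_le _) hAviol)
          have hsub : L v₀ ⊆ A.biUnion L := fun c hc => Finset.mem_biUnion.2 ⟨v₀, hv₀, hc⟩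
          have h1 := Finset.card_le_card hsub
          have h2 := h.lists v₀
          omega
        have hASc := Finset.card_le_card hAS
        obtain ⟨u, hu, w, hw, huw, hpuw⟩ := Finset.exists_ne_map_eq_of_card_lt_of_maps_to
          (show (Finset.univ : Finset (Fin k)).card < A.card by
            rw [Finset.card_univ, Fintype.card_fin]; omega)
          (fun v _ => Finset.mem_univ (p v))
        have hcommon : (L u ∩ L w).Nonempty := by
          rw [Finset.nonempty_iff_ne_empty]
          intro hdisj
          have hdisj' : Disjoint (L u) (L w) := Finset.disjoint_iff_inter_eq_empty.2 hdisj
          have hcard : (L u ∪ L w).card = (L u).card + (L w).card :=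
            Finset.card_union_of_disjoint hdisj'
          have hsub : L u ∪ L w ⊆ A.biUnion L := by
            intro c hc
            rcases Finset.mem_union.1 hc with h' | h'
            exacts [Finset.mem_biUnion.2 ⟨u, hu, h'⟩, Finset.mem_biUnion.2 ⟨w, hw, h'⟩]
          have h1 := Finset.card_le_card hsub
          have h2 := h.lists u
          have h3 := h.lists w
          have h4 := h.card_le
          omega
        obtain ⟨c', hc'⟩ := hcommon
        have hc'u : c' ∈ L u := (Finset.mem_inter.1 hc').1
        have hc'w : c' ∈ L w := (Finset.mem_inter.1 hc').2
        have huS : u ∈ S := hAS hu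
        have hwS : w ∈ S := hAS hw
        set S'' : Finset V := S \ {u, w} with hS''def
        have huwsub : {u, w} ⊆ S := by
          intro x hx
          rcases Finset.mem_insert.1 hx with rfl | hx
          · exact huS
          · rw [Finset.mem_singleton] at hx; subst hx; exact hwS
        have huwcard : ({u, w} : Finset V).card = 2 := by
          rw [Finset.card_insert_of_notMem (by simpa using huw), Finset.card_singleton]
        have hS''card : S''.card = S.card - 2 := by
          rw [hS''def, Finset.card_sdiff_of_subset huwsub, huwcard]
        set j'' := (S''.image p).card with hj''def
        have hj''le : j'' ≤ (S.image p).card :=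
          Finset.card_le_card (Finset.image_subset_image Finset.sdiff_subset)
        have hj''ge : (S.image p).card ≤ j'' + 1 := by
          have hsub : S.image p \ {p u} ⊆ S''.image p := by
            intro i hi
            rw [Finset.mem_sdiff, Finset.mem_singleton] at hi
            obtain ⟨hi1, hi2⟩ := hi
            obtain ⟨v, hvS, rfl⟩ := Finset.mem_image.1 hi1
            refine Finset.mem_image.2 ⟨v, ?_, rfl⟩
            rw [hS''def, Finset.mem_sdiff]
            refine ⟨hvS, ?_⟩
            simp only [Finset.mem_insert, Finset.mem_singleton]
            rintro (rfl | rfl)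
            · exact hi2 rfl
            · exact hi2 hpuw.symm
          have h1 := Finset.card_le_card hsub
          have h2 : (S.image p).card - 1 ≤ (S.image p \ {p u}).card := by
            have := Finset.le_card_sdiff ({p u} : Finset (Fin k)) (S.image p)
            simp only [Finset.card_singleton] at this
            exact this
          omega
        set m'' := k - 1 - j'' with hm''def
        set q₂ : ↥S'' ⊕ Fin m'' → (Fin k) ⊕ (Fin m'') :=
          Sum.map (fun v => p v.1) id with hq₂
        set G₂ : SimpleGraph (↥S'' ⊕ Fin m'') :=
          { Adj := fun x y => q₂ x ≠ q₂ y
            symm := ⟨fun x y hxy => hxy.symm⟩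
            loopless := ⟨fun x hx => hx rfl⟩ } with hG₂
        have hG₂adj : ∀ x y, G₂.Adj x y ↔ q₂ x ≠ q₂ y := fun x y => Iff.rfl
        have himgq₂ : Finset.univ.image q₂ =
            ((S''.image p).image Sum.inl) ∪
              (Finset.univ.image (Sum.inr : Fin m'' → (Fin k) ⊕ (Fin m''))) := by
          ext x
          simp only [Finset.mem_image, Finset.mem_univ, true_and, Finset.mem_union]
          constructor
          · rintro ⟨y, rfl⟩
            cases y with
            | inl v => exact Or.inl ⟨p v.1, ⟨v.1, v.2, rfl⟩, rfl⟩
            | inr i => exact Or.inr ⟨i, rfl⟩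
          · rintro (⟨i, ⟨v, hv, rfl⟩, rfl⟩ | ⟨i, rfl⟩)
            · exact ⟨Sum.inl ⟨v, hv⟩, rfl⟩
            · exact ⟨Sum.inr i, rfl⟩
        have hq₂card : (Finset.univ.image q₂).card = j'' + m'' := by
          rw [himgq₂, Finset.card_union_of_disjoint
            (by simp [Finset.disjoint_left]),
            Finset.card_image_of_injective _ Sum.inl_injective,
            Finset.card_image_of_injective _ Sum.inr_injective,
            Finset.card_univ, Fintype.card_fin]
        have hχ₂ : G₂.chromaticNumber = ((k - 1 : ℕ) : ℕ∞) := by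
          rw [chromaticNumber_multipartite G₂ q₂ hG₂adj]
          norm_cast
          rw [hq₂card]
          omega
        have hcardW₂ : Fintype.card (↥S'' ⊕ Fin m'') = S''.card + m'' := by
          rw [Fintype.card_sum, Fintype.card_coe, Fintype.card_fin]
        have hcV := h.card_le
        have hlt₂ : Fintype.card (↥S'' ⊕ Fin m'') < Fintype.card V := by
          rw [hcardW₂]; omega
        have hle₂ : Fintype.card (↥S'' ⊕ Fin m'') ≤ 2 * (k - 1) + 1 := by
          rw [hcardW₂]; omega
        set L₂ : ↥S'' ⊕ Fin m'' → Finset ℕ :=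
          Sum.elim (fun v => (L v.1).erase c') (fun _ => Finset.range (k - 1)) with hL₂
        have hL₂size : ∀ x, k - 1 ≤ (L₂ x).card := by
          intro x
          cases x with
          | inl v =>
            simp only [hL₂, Sum.elim_inl]
            have h1 := h.lists v.1
            have h2 := Finset.pred_card_le_card_erase (s := L v.1) (a := c')
            omega
          | inr i =>
            simp only [hL₂, Sum.elim_inr, Finset.card_range, le_refl]
        obtain ⟨f₂, hf₂mem, hf₂prop⟩ := choosable_of_listChromaticNumber G₂
          (h.minimal _ G₂ (k - 1) hlt₂ hχ₂ hle₂) L₂ hL₂size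
        have hmemS'' : ∀ v, v ∉ U → ¬(v = u ∨ v = w) → v ∈ S'' := by
          intro v hv hv2
          rw [hS''def, Finset.mem_sdiff]
          refine ⟨(hSmem v).2 hv, ?_⟩
          simp only [Finset.mem_insert, Finset.mem_singleton]
          exact hv2
        have huU : u ∉ U := (hSmem u).1 huS
        have hc'D : c' ∉ D := fun hcD => hDS u huU c' hcD hc'u
        refine ⟨fun v => if hv : v ∈ U then σ v else
            if hv2 : v = u ∨ v = w then c' else f₂ (Sum.inl ⟨v, hmemS'' v hv hv2⟩),
          fun v => ?_, fun x y hxy heq => ?_⟩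
        · by_cases hv : v ∈ U
          · simp only [dif_pos hv]; exact (hσall v hv).1
          · simp only [dif_neg hv]
            by_cases hv2 : v = u ∨ v = w
            · simp only [dif_pos hv2]
              rcases hv2 with rfl | rfl
              exacts [hc'u, hc'w]
            · simp only [dif_neg hv2]
              have := hf₂mem (Sum.inl ⟨v, hmemS'' v hv hv2⟩)
              simp only [hL₂, Sum.elim_inl] at this
              exact Finset.erase_subset _ _ this
        · have hpxy : p x ≠ p y := (h.adj_iff x y).1 hxy
          by_cases hx : x ∈ U <;> by_cases hy : y ∈ U
          · simp only [dif_pos hx, dif_pos hy] at heq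
            exact hxy.ne (hσinj x hx y hy heq)
          · simp only [dif_pos hx, dif_neg hy] at heq
            by_cases hy2 : y = u ∨ y = w
            · simp only [dif_pos hy2] at heq
              exact hc'D (heq ▸ (hσall x hx).2.1)
            · simp only [dif_neg hy2] at heq
              have hmem := hf₂mem (Sum.inl ⟨y, hmemS'' y hy hy2⟩)
              simp only [hL₂, Sum.elim_inl] at hmem
              exact hDS y hy (σ x) (hσall x hx).2.1
                (heq ▸ Finset.erase_subset _ _ hmem)
          · simp only [dif_neg hx, dif_pos hy] at heq
            by_cases hx2 : x = u ∨ x = w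
            · simp only [dif_pos hx2] at heq
              exact hc'D (heq ▸ (hσall y hy).2.1)
            · simp only [dif_neg hx2] at heq
              have hmem := hf₂mem (Sum.inl ⟨x, hmemS'' x hx hx2⟩)
              simp only [hL₂, Sum.elim_inl] at hmem
              exact hDS x hx (σ y) (hσall y hy).2.1
                (heq ▸ Finset.erase_subset _ _ hmem)
          · simp only [dif_neg hx, dif_neg hy] at heq
            by_cases hx2 : x = u ∨ x = w <;> by_cases hy2 : y = u ∨ y = w
            · rcases hx2 with rfl | rfl <;> rcases hy2 with rfl | rfl
              · exact hxy.ne rfl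
              · exact hpxy hpuw
              · exact hpxy hpuw.symm
              · exact hxy.ne rfl
            · simp only [dif_pos hx2, dif_neg hy2] at heq
              have hmem := hf₂mem (Sum.inl ⟨y, hmemS'' y hy hy2⟩)
              simp only [hL₂, Sum.elim_inl] at hmem
              exact Finset.ne_of_mem_erase hmem heq.symm
            · simp only [dif_neg hx2, dif_pos hy2] at heq
              have hmem := hf₂mem (Sum.inl ⟨x, hmemS'' x hx hx2⟩)
              simp only [hL₂, Sum.elim_inl] at hmem
              exact Finset.ne_of_mem_erase hmem heq
            · simp only [dif_neg hx2, dif_neg hy2] at heq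
              refine hf₂prop (show G₂.Adj (Sum.inl ⟨x, hmemS'' x hx hx2⟩)
                (Sum.inl ⟨y, hmemS'' y hy hy2⟩) from ?_) heq
              rw [hG₂adj]
              simp only [hq₂, Sum.map_inl, ne_eq, Sum.inl.injEq]
              exact hpxy
end

section
/- Let G be a graph with colour set C admitting an injection h: C → V(G) with c ∈ L(h(c)) for all c ∈ C, and let f: V(G) → C be a proper colouring. Then there exists a proper surjective colouring g: V(G) → C such that every vertex v satisfies either g(v) ∈ L(v) or g⁻¹(g(v)) ⊆ f⁻¹(f(v)). -/
open Finset
open scoped Classical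

/-- Given an injection `h : C → V(G)` with `c ∈ L(h c)` and a proper colouring
`f : V(G) → C`, there is a proper surjective colouring `g : V(G) → C` such that every
vertex `v` satisfies `g v ∈ L v` or `g⁻¹(g v) ⊆ f⁻¹(f v)`. -/
theorem stmt_8 (V : Type) [Fintype V] (G : SimpleGraph V) (L : V → Finset ℕ)
    (m : ℕ → V) (hinj : Set.InjOn m ↑(colorSet L)) (hmem : ∀ c ∈ colorSet L, c ∈ L (m c))
    (f : V → ℕ) (hfC : ∀ v, f v ∈ colorSet L)
    (hfprop : ∀ ⦃u w : V⦄, G.Adj u w → f u ≠ f w) :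
    ∃ g : V → ℕ, (∀ v, g v ∈ colorSet L) ∧ (∀ c ∈ colorSet L, ∃ v, g v = c) ∧
      (∀ ⦃u w : V⦄, G.Adj u w → g u ≠ g w) ∧
      ∀ v, g v ∈ L v ∨ (∀ u, g u = g v → f u = f v) := by
  classical
  suffices h : ∀ n (g : V → ℕ),
      (colorSet L).card - ((colorSet L).filter (fun c => g (m c) = c)).card ≤ n →
      (∀ v, g v ∈ colorSet L) →
      (∀ ⦃u w : V⦄, G.Adj u w → g u ≠ g w) →
      (∀ v, (g v ∈ L v ∧ ∀ u, g u = g v → u = v) ∨ g v = f v) →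
      ∃ g' : V → ℕ, (∀ v, g' v ∈ colorSet L) ∧ (∀ c ∈ colorSet L, ∃ v, g' v = c) ∧
        (∀ ⦃u w : V⦄, G.Adj u w → g' u ≠ g' w) ∧
        ∀ v, g' v ∈ L v ∨ (∀ u, g' u = g' v → f u = f v) by
    exact h (colorSet L).card f (Nat.sub_le _ _) hfC hfprop (fun v => Or.inr rfl)
  intro n
  induction n with
  | zero =>
    intro g hcard hgC hgprop hinv
    have hfil : (colorSet L).filter (fun c => g (m c) = c) = colorSet L := by
      apply Finset.eq_of_subset_of_card_le (Finset.filter_subset _ _)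
      omega
    refine ⟨g, hgC, ?_, hgprop, ?_⟩
    · intro c hc
      rw [← hfil] at hc
      exact ⟨m c, (Finset.mem_filter.mp hc).2⟩
    · intro v
      rcases hinv v with ⟨h1, _⟩ | hv
      · exact Or.inl h1
      · refine Or.inr fun u hu => ?_
        rcases hinv u with ⟨_, h2⟩ | hu2
        · rw [h2 v hu.symm]
        · rw [hu2] at hu; rw [hu]; exact hv
  | succ n ih =>
    intro g hcard hgC hgprop hinv
    by_cases hex : ∃ c ∈ colorSet L, ∀ v, g v ≠ c
    · obtain ⟨c, hcC, hcun⟩ := hex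
      set g' := Function.update g (m c) c with hg'
      have hg'mc : g' (m c) = c := Function.update_self _ _ _
      have hg'ne : ∀ v, v ≠ m c → g' v = g v := fun v hv => Function.update_of_ne hv _ _
      have hg'eqc : ∀ v, g' v = c → v = m c := by
        intro v hv
        by_contra hne
        exact hcun v ((hg'ne v hne) ▸ hv)
      -- cardinality step
      have hsub : insert c ((colorSet L).filter (fun c => g (m c) = c)) ⊆
          (colorSet L).filter (fun c => g' (m c) = c) := by
        intro c' hc'
        rcases Finset.mem_insert.mp hc' with rfl | hc'
        · exact Finset.mem_filter.mpr ⟨hcC, hg'mc⟩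
        · obtain ⟨hc'C, hc'eq⟩ := Finset.mem_filter.mp hc'
          refine Finset.mem_filter.mpr ⟨hc'C, ?_⟩
          have hne : m c' ≠ m c := by
            intro h
            exact hcun (m c') (hc'eq.trans (hinj hc'C hcC h))
          rw [hg'ne _ hne, hc'eq]
      have hcnot : c ∉ (colorSet L).filter (fun c => g (m c) = c) := by
        intro h
        exact hcun (m c) (Finset.mem_filter.mp h).2
      have hcard' : ((colorSet L).filter (fun c => g (m c) = c)).card + 1 ≤
          ((colorSet L).filter (fun c => g' (m c) = c)).card := by
        calc _ = (insert c ((colorSet L).filter (fun c => g (m c) = c))).card := by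
                rw [Finset.card_insert_of_notMem hcnot]
          _ ≤ _ := Finset.card_le_card hsub
      have hle : ((colorSet L).filter (fun c => g' (m c) = c)).card ≤ (colorSet L).card :=
        Finset.card_le_card (Finset.filter_subset _ _)
      apply ih g' (by omega)
      · intro v
        by_cases hv : v = m c
        · rw [hv, hg'mc]; exact hcC
        · rw [hg'ne v hv]; exact hgC v
      · intro u w hadj
        have hne : u ≠ w := G.ne_of_adj hadj
        by_cases hu : u = m c
        · have hw : w ≠ m c := by rw [hu] at hne; exact fun h => hne h.symm
          rw [hu, hg'mc, hg'ne w hw]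
          exact fun h => hcun w h.symm
        · by_cases hw : w = m c
          · rw [hw, hg'mc, hg'ne u hu]
            exact hcun u
          · rw [hg'ne u hu, hg'ne w hw]; exact hgprop hadj
      · intro v
        by_cases hv : v = m c
        · subst hv
          refine Or.inl ⟨by rw [hg'mc]; exact hmem c hcC, fun u hu => ?_⟩
          exact hg'eqc u (by rw [hu, hg'mc])
        · rw [hg'ne v hv]
          rcases hinv v with ⟨h1, h2⟩ | hv2
          · refine Or.inl ⟨h1, fun u hu => ?_⟩
            by_cases hu' : u = m c
            · exfalso
              rw [hu', hg'mc] at hu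
              exact hcun v hu.symm
            · rw [hg'ne u hu'] at hu
              exact h2 u hu
          · exact Or.inr hv2
    · push_neg at hex
      refine ⟨g, hgC, hex, hgprop, ?_⟩
      intro v
      rcases hinv v with ⟨h1, _⟩ | hv
      · exact Or.inl h1
      · refine Or.inr fun u hu => ?_
        rcases hinv u with ⟨_, h2⟩ | hu2
        · rw [h2 v hu.symm]
        · rw [hu2] at hu; rw [hu]; exact hv
end
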